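/- Let k ≥ 1, and for each i ∈ {1,…,k} let λ_i ≥ 0, let r > 0, K > 0, T > 0, and let (p_{ij}) with p_{ij} ≥ 0 and Σ_{j≠i} p_{ij} = 1 (when λ_i > 0). Then the system of Volterra integral equations g_i(t) = K e^{−(λ_i + r)(T−t)} + ∫₀^{T−t} λ_i e^{−(λ_i + r)v} Σ_{j≠i} p_{ij} g_j(t+v) dv, for t ∈ [0,T], i ∈ {1,…,k}, has the unique continuous bounded solution g_i(t) = K e^{−r(T−t)} for all i. -/

import Mathlib

open MeasureTheory

lemma vsu_exp_int (c s : ℝ) : ∫ v in (0:ℝ)..s, Real.exp (c * v) * c = Real.exp (c * s) - 1 := by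
  have h : ∀ v ∈ Set.uIcc (0:ℝ) s, HasDerivAt (fun u => Real.exp (c * u)) (Real.exp (c * v) * c) v := by
    intro v _
    simpa using ((hasDerivAt_id v).const_mul c).exp
  rw [intervalIntegral.integral_eq_sub_of_hasDerivAt h]
  · simp
  · exact ((Real.continuous_exp.comp (continuous_const.mul continuous_id)).mul continuous_const).intervalIntegrable _ _

lemma vsu_int_CE (C c s : ℝ) (hc : c ≠ 0) :
    ∫ v in (0:ℝ)..s, C * Real.exp (c * v) = C / c * (Real.exp (c * s) - 1) := by
  have h : ∀ v : ℝ, C * Real.exp (c * v) = (C / c) * (Real.exp (c * v) * c) := by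
    intro v; field_simp
  simp_rw [h]
  rw [intervalIntegral.integral_const_mul, vsu_exp_int]

lemma vsu_part1 (k : ℕ)
    (lam : Fin k → ℝ) (hlam : ∀ i, 0 ≤ lam i)
    (r K T : ℝ)
    (p : Fin k → Fin k → ℝ)
    (hpsum : ∀ i, 0 < lam i → ∑ j ∈ Finset.univ.filter (· ≠ i), p i j = 1) :
    ∀ i : Fin k, ∀ t ∈ Set.Icc (0:ℝ) T,
        K * Real.exp (-r * (T - t)) =
          K * Real.exp (-(lam i + r) * (T - t)) +
            ∫ v in (0:ℝ)..(T - t), lam i * Real.exp (-(lam i + r) * v) *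
              ∑ j ∈ Finset.univ.filter (· ≠ i), p i j * (K * Real.exp (-r * (T - (t + v)))) := by
  intro i t ht
  rcases eq_or_lt_of_le (hlam i) with h0 | hpos
  · simp [← h0]
  · set s := T - t with hs
    have key : ∀ v : ℝ, lam i * Real.exp (-(lam i + r) * v) *
        ∑ j ∈ Finset.univ.filter (· ≠ i), p i j * (K * Real.exp (-r * (T - (t + v)))) =
        (lam i * K * Real.exp (-r * s)) * Real.exp ((-lam i) * v) := by
      intro v
      rw [← Finset.sum_mul, hpsum i hpos, one_mul]
      have e1 : Real.exp (-(lam i + r) * v) * Real.exp (-r * (T - (t + v))) =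
          Real.exp (-r * s) * Real.exp (-lam i * v) := by
        rw [← Real.exp_add, ← Real.exp_add, hs]; ring_nf
      calc lam i * Real.exp (-(lam i + r) * v) * (K * Real.exp (-r * (T - (t + v))))
          = lam i * K * (Real.exp (-(lam i + r) * v) * Real.exp (-r * (T - (t + v)))) := by ring
        _ = lam i * K * Real.exp (-r * s) * Real.exp (-lam i * v) := by rw [e1]; ring
    simp_rw [key]
    rw [vsu_int_CE _ _ _ (by nlinarith : (-lam i) ≠ 0)]
    have e2 : Real.exp (-(lam i + r) * s) = Real.exp (-lam i * s) * Real.exp (-r * s) := by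
      rw [← Real.exp_add]; ring_nf
    have e3 : lam i * K * Real.exp (-r * s) / (-lam i) = -(K * Real.exp (-r * s)) := by
      have hne : lam i ≠ 0 := ne_of_gt hpos
      rw [div_neg, show lam i * K * Real.exp (-r * s) = K * Real.exp (-r * s) * lam i by ring,
        mul_div_assoc, div_self hne, mul_one]
    rw [e2, e3]
    ring

lemma vsu_part2 (k : ℕ) (hk : 1 ≤ k)
    (lam : Fin k → ℝ) (hlam : ∀ i, 0 ≤ lam i)
    (r K T : ℝ) (hr : 0 < r) (hK : 0 < K) (hT : 0 < T)
    (p : Fin k → Fin k → ℝ) (hp : ∀ i j, 0 ≤ p i j)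
    (hpsum : ∀ i, 0 < lam i → ∑ j ∈ Finset.univ.filter (· ≠ i), p i j = 1)
    (g : Fin k → ℝ → ℝ)
    (hg : ∀ i, ContinuousOn (g i) (Set.Icc 0 T))
    (hBex : ∃ B : ℝ, ∀ i, ∀ t ∈ Set.Icc (0:ℝ) T, |g i t| ≤ B)
    (heq : ∀ i : Fin k, ∀ t ∈ Set.Icc (0:ℝ) T,
          g i t = K * Real.exp (-(lam i + r) * (T - t)) +
            ∫ v in (0:ℝ)..(T - t), lam i * Real.exp (-(lam i + r) * v) *
              ∑ j ∈ Finset.univ.filter (· ≠ i), p i j * g j (t + v)) :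
    ∀ i : Fin k, ∀ t ∈ Set.Icc (0:ℝ) T, g i t = K * Real.exp (-r * (T - t)) := by
  obtain ⟨B, hB⟩ := hBex
  set h : Fin k → ℝ → ℝ := fun j u => g j u - K * Real.exp (-r * (T - u)) with hdef
  -- the integral equation for h
  have hInt : ∀ i : Fin k, ∀ t ∈ Set.Icc (0:ℝ) T,
      h i t = ∫ v in (0:ℝ)..(T - t), lam i * Real.exp (-(lam i + r) * v) *
        ∑ j ∈ Finset.univ.filter (· ≠ i), p i j * h j (t + v) := by
    intro i t ht
    have hs0 : (0:ℝ) ≤ T - t := by linarith [ht.2]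
    have hu : Set.uIcc (0:ℝ) (T - t) = Set.Icc (0:ℝ) (T - t) := Set.uIcc_of_le hs0
    have maps : Set.MapsTo (fun v => t + v) (Set.uIcc (0:ℝ) (T - t)) (Set.Icc (0:ℝ) T) := by
      rw [hu]
      intro v hv
      show t + v ∈ Set.Icc (0:ℝ) T
      exact ⟨by linarith [ht.1, hv.1], by linarith [hv.2]⟩
    have c1 : ContinuousOn (fun v => lam i * Real.exp (-(lam i + r) * v) *
        ∑ j ∈ Finset.univ.filter (· ≠ i), p i j * g j (t + v)) (Set.uIcc (0:ℝ) (T - t)) := by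
      apply ContinuousOn.mul
      · exact (continuous_const.mul (Real.continuous_exp.comp
          (continuous_const.mul continuous_id))).continuousOn
      · apply continuousOn_finset_sum
        intro j _
        exact continuousOn_const.mul ((hg j).comp
          (continuous_const.add continuous_id).continuousOn maps)
    have c2 : ContinuousOn (fun v => lam i * Real.exp (-(lam i + r) * v) *
        ∑ j ∈ Finset.univ.filter (· ≠ i), p i j * (K * Real.exp (-r * (T - (t + v)))))
        (Set.uIcc (0:ℝ) (T - t)) := by
      apply ContinuousOn.mul
      · exact (continuous_const.mul (Real.continuous_exp.comp
          (continuous_const.mul continuous_id))).continuousOn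
      · apply continuousOn_finset_sum
        intro j _
        apply continuousOn_const.mul
        exact (continuous_const.mul (Real.continuous_exp.comp
          (continuous_const.mul (continuous_const.sub
            (continuous_const.add continuous_id))))).continuousOn
    have i1 : IntervalIntegrable (fun v => lam i * Real.exp (-(lam i + r) * v) *
        ∑ j ∈ Finset.univ.filter (· ≠ i), p i j * g j (t + v)) volume 0 (T - t) :=
      c1.intervalIntegrable
    have i2 : IntervalIntegrable (fun v => lam i * Real.exp (-(lam i + r) * v) *
        ∑ j ∈ Finset.univ.filter (· ≠ i), p i j * (K * Real.exp (-r * (T - (t + v)))))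
        volume 0 (T - t) := c2.intervalIntegrable
    have e1 := heq i t ht
    have e2 := vsu_part1 k lam hlam r K T p hpsum i t ht
    have esub : h i t = (∫ v in (0:ℝ)..(T - t), lam i * Real.exp (-(lam i + r) * v) *
          ∑ j ∈ Finset.univ.filter (· ≠ i), p i j * g j (t + v)) -
        ∫ v in (0:ℝ)..(T - t), lam i * Real.exp (-(lam i + r) * v) *
          ∑ j ∈ Finset.univ.filter (· ≠ i), p i j * (K * Real.exp (-r * (T - (t + v)))) := by
      simp only [hdef]
      rw [e1, e2]; ring
    rw [esub, ← intervalIntegral.integral_sub i1 i2]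
    apply intervalIntegral.integral_congr
    intro v _
    simp only [hdef]
    rw [← mul_sub, ← Finset.sum_sub_distrib]
    congr 1
    apply Finset.sum_congr rfl
    intro j _
    ring
  -- continuity and boundedness of h
  have hB' : ∀ j : Fin k, ∀ u ∈ Set.Icc (0:ℝ) T, |h j u| ≤ B + K := by
    intro j u hu
    have h1 : |g j u| ≤ B := hB j u hu
    have hexp : Real.exp (-r * (T - u)) ≤ 1 := by
      calc Real.exp (-r * (T - u)) ≤ Real.exp 0 :=
            Real.exp_le_exp.mpr (by nlinarith [hu.2])
        _ = 1 := Real.exp_zero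
    have h2 : |K * Real.exp (-r * (T - u))| ≤ K := by
      rw [abs_mul, abs_of_pos hK, abs_of_pos (Real.exp_pos _)]
      nlinarith
    have h3 : |h j u| ≤ |g j u| + |K * Real.exp (-r * (T - u))| := by
      simp only [hdef]
      exact abs_sub _ _
    linarith
  have i0 : Fin k := ⟨0, hk⟩
  have hBK : (0:ℝ) ≤ B + K :=
    le_trans (abs_nonneg _) (hB' i0 0 ⟨le_refl _, hT.le⟩)
  -- the contraction factor
  have hne : (Finset.univ : Finset (Fin k)).Nonempty := ⟨i0, Finset.mem_univ _⟩
  set q : ℝ := Finset.univ.sup' hne (fun i => lam i / (lam i + r)) with hqdef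
  have hqi : ∀ i, lam i / (lam i + r) ≤ q := fun i => Finset.le_sup' (fun i => lam i / (lam i + r)) (Finset.mem_univ i)
  have hq0 : (0:ℝ) ≤ q :=
    le_trans (div_nonneg (hlam i0) (by linarith [hlam i0])) (hqi i0)
  have hq1 : q < 1 := by
    rw [hqdef]
    apply (Finset.sup'_lt_iff hne).mpr
    intro i _
    rw [div_lt_one (by linarith [hlam i])]
    linarith [hlam i]
  -- one contraction step
  have step : ∀ C : ℝ, 0 ≤ C → (∀ j : Fin k, ∀ u ∈ Set.Icc (0:ℝ) T, |h j u| ≤ C) →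
      ∀ i : Fin k, ∀ t ∈ Set.Icc (0:ℝ) T, |h i t| ≤ q * C := by
    intro C hC hbound i t ht
    have hs0 : (0:ℝ) ≤ T - t := by linarith [ht.2]
    have hu : Set.uIcc (0:ℝ) (T - t) = Set.Icc (0:ℝ) (T - t) := Set.uIcc_of_le hs0
    rcases eq_or_lt_of_le (hlam i) with h0 | hpos
    · have hz : h i t = 0 := by rw [hInt i t ht]; simp [← h0]
      rw [hz, abs_zero]
      positivity
    · have hlr : 0 < lam i + r := by linarith
      set F : ℝ → ℝ := fun v => lam i * Real.exp (-(lam i + r) * v) *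
          ∑ j ∈ Finset.univ.filter (· ≠ i), p i j * h j (t + v) with hF
      have maps : Set.MapsTo (fun v => t + v) (Set.uIcc (0:ℝ) (T - t)) (Set.Icc (0:ℝ) T) := by
        rw [hu]
        intro v hv
        show t + v ∈ Set.Icc (0:ℝ) T
        exact ⟨by linarith [ht.1, hv.1], by linarith [hv.2]⟩
      have cF : ContinuousOn F (Set.uIcc (0:ℝ) (T - t)) := by
        apply ContinuousOn.mul
        · exact (continuous_const.mul (Real.continuous_exp.comp
            (continuous_const.mul continuous_id))).continuousOn
        · apply continuousOn_finset_sum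
          intro j _
          apply continuousOn_const.mul
          apply ContinuousOn.sub
          · exact (hg j).comp (continuous_const.add continuous_id).continuousOn maps
          · exact (continuous_const.mul (Real.continuous_exp.comp
              (continuous_const.mul (continuous_const.sub
                (continuous_const.add continuous_id))))).continuousOn
      have iFabs : IntervalIntegrable (fun v => |F v|) volume 0 (T - t) :=
        cF.abs.intervalIntegrable
      have iG : IntervalIntegrable (fun v => (lam i * C) * Real.exp (-(lam i + r) * v))
          volume 0 (T - t) :=
        (continuous_const.mul (Real.continuous_exp.comp
          (continuous_const.mul continuous_id))).intervalIntegrable _ _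
      have hle : ∀ v ∈ Set.Icc (0:ℝ) (T - t),
          |F v| ≤ (lam i * C) * Real.exp (-(lam i + r) * v) := by
        intro v hv
        have htv : t + v ∈ Set.Icc (0:ℝ) T := ⟨by linarith [ht.1, hv.1], by linarith [hv.2]⟩
        have hsum : |∑ j ∈ Finset.univ.filter (· ≠ i), p i j * h j (t + v)| ≤ C := by
          calc |∑ j ∈ Finset.univ.filter (· ≠ i), p i j * h j (t + v)|
              ≤ ∑ j ∈ Finset.univ.filter (· ≠ i), |p i j * h j (t + v)| :=
                Finset.abs_sum_le_sum_abs _ _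
            _ ≤ ∑ j ∈ Finset.univ.filter (· ≠ i), p i j * C := by
                apply Finset.sum_le_sum
                intro j _
                rw [abs_mul, abs_of_nonneg (hp i j)]
                exact mul_le_mul_of_nonneg_left (hbound j _ htv) (hp i j)
            _ = C := by rw [← Finset.sum_mul, hpsum i hpos, one_mul]
        calc |F v| = lam i * Real.exp (-(lam i + r) * v) *
              |∑ j ∈ Finset.univ.filter (· ≠ i), p i j * h j (t + v)| := by
              rw [hF]
              rw [abs_mul, abs_mul, abs_of_nonneg (hlam i),
                abs_of_pos (Real.exp_pos _)]
          _ ≤ lam i * Real.exp (-(lam i + r) * v) * C := by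
              apply mul_le_mul_of_nonneg_left hsum
              positivity
          _ = (lam i * C) * Real.exp (-(lam i + r) * v) := by ring
      have habs : |∫ v in (0:ℝ)..(T - t), F v| ≤ ∫ v in (0:ℝ)..(T - t), |F v| :=
        intervalIntegral.abs_integral_le_integral_abs hs0
      have hmono : (∫ v in (0:ℝ)..(T - t), |F v|) ≤
          ∫ v in (0:ℝ)..(T - t), (lam i * C) * Real.exp (-(lam i + r) * v) :=
        intervalIntegral.integral_mono_on hs0 iFabs iG hle
      have hval : (∫ v in (0:ℝ)..(T - t), (lam i * C) * Real.exp (-(lam i + r) * v)) =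
          lam i / (lam i + r) * C * (1 - Real.exp (-(lam i + r) * (T - t))) := by
        rw [vsu_int_CE _ _ _ (by linarith : -(lam i + r) ≠ 0), div_neg]
        ring
      have hE : (0:ℝ) ≤ Real.exp (-(lam i + r) * (T - t)) := (Real.exp_pos _).le
      have hE1 : Real.exp (-(lam i + r) * (T - t)) ≤ 1 := by
        calc Real.exp (-(lam i + r) * (T - t)) ≤ Real.exp 0 :=
              Real.exp_le_exp.mpr (by nlinarith)
          _ = 1 := Real.exp_zero
      have hd0 : (0:ℝ) ≤ lam i / (lam i + r) := div_nonneg (hlam i) hlr.le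
      calc |h i t| = |∫ v in (0:ℝ)..(T - t), F v| := by rw [hInt i t ht]
        _ ≤ ∫ v in (0:ℝ)..(T - t), |F v| := habs
        _ ≤ ∫ v in (0:ℝ)..(T - t), (lam i * C) * Real.exp (-(lam i + r) * v) := hmono
        _ = lam i / (lam i + r) * C * (1 - Real.exp (-(lam i + r) * (T - t))) := hval
        _ ≤ q * C := by
            nlinarith [mul_nonneg (sub_nonneg.mpr (hqi i)) hC,
              mul_nonneg (mul_nonneg hd0 hC) hE]
  -- iterate
  have iter : ∀ n : ℕ, ∀ i : Fin k, ∀ t ∈ Set.Icc (0:ℝ) T, |h i t| ≤ q ^ n * (B + K) := by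
    intro n
    induction n with
    | zero => simpa using hB'
    | succ n ih =>
      intro i t ht
      calc |h i t| ≤ q * (q ^ n * (B + K)) :=
            step (q ^ n * (B + K)) (by positivity) ih i t ht
        _ = q ^ (n + 1) * (B + K) := by ring
  intro i t ht
  have hlim : Filter.Tendsto (fun n : ℕ => q ^ n * (B + K)) Filter.atTop (nhds 0) := by
    simpa using (tendsto_pow_atTop_nhds_zero_of_lt_one hq0 hq1).mul_const (B + K)
  have hle0 : |h i t| ≤ 0 := ge_of_tendsto' hlim (fun n => iter n i t ht)
  have hz : h i t = 0 := abs_nonpos_iff.mp hle0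
  have : g i t - K * Real.exp (-r * (T - t)) = 0 := hz
  linarith

/-- Uniqueness: any continuous bounded solution of the asymptotic-slope Volterra system
equals `g i t = K·e^{−r(T−t)}`; moreover this function is indeed a solution. -/
theorem volterra_system_unique_solution (k : ℕ) (hk : 1 ≤ k)
    (lam : Fin k → ℝ) (hlam : ∀ i, 0 ≤ lam i)
    (r K T : ℝ) (hr : 0 < r) (hK : 0 < K) (hT : 0 < T)
    (p : Fin k → Fin k → ℝ) (hp : ∀ i j, 0 ≤ p i j)
    (hpsum : ∀ i, 0 < lam i → ∑ j ∈ Finset.univ.filter (· ≠ i), p i j = 1) :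
    ((∀ i : Fin k, ∀ t ∈ Set.Icc (0:ℝ) T,
        K * Real.exp (-r * (T - t)) =
          K * Real.exp (-(lam i + r) * (T - t)) +
            ∫ v in (0:ℝ)..(T - t), lam i * Real.exp (-(lam i + r) * v) *
              ∑ j ∈ Finset.univ.filter (· ≠ i), p i j * (K * Real.exp (-r * (T - (t + v))))) ∧
      ∀ g : Fin k → ℝ → ℝ,
        (∀ i, ContinuousOn (g i) (Set.Icc 0 T)) →
        (∃ B : ℝ, ∀ i, ∀ t ∈ Set.Icc (0:ℝ) T, |g i t| ≤ B) →
        (∀ i : Fin k, ∀ t ∈ Set.Icc (0:ℝ) T,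
          g i t = K * Real.exp (-(lam i + r) * (T - t)) +
            ∫ v in (0:ℝ)..(T - t), lam i * Real.exp (-(lam i + r) * v) *
              ∑ j ∈ Finset.univ.filter (· ≠ i), p i j * g j (t + v)) →
        ∀ i : Fin k, ∀ t ∈ Set.Icc (0:ℝ) T, g i t = K * Real.exp (-r * (T - t))) := by
  exact ⟨vsu_part1 k lam hlam r K T p hpsum,
    fun g hg hBex heq => vsu_part2 k hk lam hlam r K T hr hK hT p hp hpsum g hg hBex heq⟩
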